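/- Let A be a k×k matrix over R with det(A) ≠ 0. Then the set of associated primes of M_A = R^k/AR^k is exactly the set of ideals ⟨π⟩ where π ranges over the irreducible elements of R dividing det(A). In particular every associated prime of M_A is principal. -/

import Mathlib

noncomputable section

/-- The ring `R = ℤ[u₁^{±1},…,u_d^{±1}]`, realized as the group algebra of `ℤ^d` over `ℤ`. -/
abbrev LaurentR (d : ℕ) : Type := AddMonoidAlgebra ℤ (Fin d → ℤ)

-- Laurent localization setup
namespace LaurentAux

variable (d : ℕ)

def expEmb : (Fin d →₀ ℕ) →+ (Fin d → ℤ) where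
  toFun e i := (e i : ℤ)
  map_zero' := by ext i; simp
  map_add' a b := by ext i; simp

@[simp] theorem expEmb_apply (e : Fin d →₀ ℕ) (i : Fin d) : expEmb d e i = (e i : ℤ) := rfl

theorem expEmb_injective : Function.Injective (expEmb d) := by
  intro a b h
  ext i
  have := congrFun h i
  simpa using this

def phi : MvPolynomial (Fin d) ℤ →+* LaurentR d :=
  AddMonoidAlgebra.mapDomainRingHom ℤ (expEmb d)

theorem phi_injective : Function.Injective (phi d) :=
  AddMonoidAlgebra.mapDomain_injective (expEmb_injective d)

theorem phi_single (e : Fin d →₀ ℕ) (c : ℤ) :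
    phi d (AddMonoidAlgebra.single e c) = AddMonoidAlgebra.single (expEmb d e) c :=
  AddMonoidAlgebra.mapDomain_single

theorem phi_X (i : Fin d) :
    phi d (MvPolynomial.X i) = AddMonoidAlgebra.single (expEmb d (Finsupp.single i 1)) 1 :=
  phi_single d _ _

end LaurentAux

namespace LaurentAux

variable (d : ℕ)

theorem isUnit_single (g : Fin d → ℤ) : IsUnit (AddMonoidAlgebra.single g (1:ℤ) : LaurentR d) := by
  refine IsUnit.of_mul_eq_one (AddMonoidAlgebra.single (-g) 1) ?_
  rw [AddMonoidAlgebra.single_mul_single]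
  simp [AddMonoidAlgebra.one_def]

theorem prod_single {ι : Type*} (s : Finset ι) (f : ι → (Fin d → ℤ)) :
    (∏ i ∈ s, (AddMonoidAlgebra.single (f i) (1:ℤ) : LaurentR d))
      = AddMonoidAlgebra.single (∑ i ∈ s, f i) 1 := by
  classical
  induction s using Finset.induction_on with
  | empty => simp [AddMonoidAlgebra.one_def]
  | insert _ _ h ih =>
      rw [Finset.prod_insert h, Finset.sum_insert h, ih, AddMonoidAlgebra.single_mul_single,
        mul_one]

def Pd : MvPolynomial (Fin d) ℤ := ∏ i, MvPolynomial.X i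

theorem phi_Pd : phi d (Pd d) = AddMonoidAlgebra.single (fun _ => (1:ℤ)) 1 := by
  rw [Pd, map_prod]
  have h : ∀ i : Fin d, phi d (MvPolynomial.X i)
      = (AddMonoidAlgebra.single (expEmb d (Finsupp.single i 1)) (1:ℤ) : LaurentR d) := phi_X d
  simp_rw [h]
  rw [prod_single]
  congr 1
  funext j
  simp [Finsupp.single_apply]

theorem phi_Pd_pow (n : ℕ) :
    phi d ((Pd d) ^ n) = AddMonoidAlgebra.single (fun _ => (n:ℤ)) 1 := by
  rw [map_pow, phi_Pd, AddMonoidAlgebra.single_pow]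
  congr 1
  · funext j; simp
  · simp

def Sd : Submonoid (MvPolynomial (Fin d) ℤ) := Submonoid.powers (Pd d)

theorem Pd_ne_zero : Pd d ≠ 0 := by
  rw [Pd]
  exact Finset.prod_ne_zero_iff.mpr fun i _ => MvPolynomial.X_ne_zero i

theorem Sd_le : Sd d ≤ nonZeroDivisors (MvPolynomial (Fin d) ℤ) := by
  rintro s ⟨n, rfl⟩
  exact mem_nonZeroDivisors_of_ne_zero (pow_ne_zero n (Pd_ne_zero d))

instance : Algebra (MvPolynomial (Fin d) ℤ) (LaurentR d) := (phi d).toAlgebra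

theorem algebraMap_eq : algebraMap (MvPolynomial (Fin d) ℤ) (LaurentR d) = phi d := rfl

instance : IsLocalization (Sd d) (LaurentR d) where
  map_units := by
    rintro ⟨s, n, rfl⟩
    rw [algebraMap_eq]
    simpa [phi_Pd_pow] using isUnit_single d (fun _ => (n:ℤ))
  surj := by
    intro z
    rw [algebraMap_eq]
    suffices h : ∃ (x : MvPolynomial (Fin d) ℤ) (n : ℕ), z * phi d ((Pd d)^n) = phi d x by
      obtain ⟨x, n, hx⟩ := h
      exact ⟨⟨x, ⟨(Pd d)^n, ⟨n, rfl⟩⟩⟩, hx⟩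
    induction z using AddMonoidAlgebra.induction_linear with
    | zero => exact ⟨0, 0, by simp⟩
    | add f g hf hg =>
        obtain ⟨x₁, n₁, h₁⟩ := hf
        obtain ⟨x₂, n₂, h₂⟩ := hg
        refine ⟨x₁ * (Pd d)^n₂ + x₂ * (Pd d)^n₁, n₁ + n₂, ?_⟩
        rw [map_add, map_mul, map_mul, ← h₁, ← h₂, pow_add, map_mul]
        ring
    | single g c =>
        set n : ℕ := ∑ i, (g i).natAbs with hn
        have hge : ∀ j, (0:ℤ) ≤ g j + n := by
          intro j
          have h1 : ((g j).natAbs : ℤ) ≤ (n:ℤ) := by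
            exact_mod_cast Nat.cast_le.mpr
              (Finset.single_le_sum (f := fun i => (g i).natAbs)
                (fun i _ => Nat.zero_le _) (Finset.mem_univ j))
          have h2 : -g j ≤ ((g j).natAbs : ℤ) := by
            rw [← Int.abs_eq_natAbs]
            exact neg_le_abs _
          linarith
        refine ⟨AddMonoidAlgebra.single (Equiv.symm Finsupp.equivFunOnFinite fun i => (g i + n).toNat) c,
          n, ?_⟩
        show (AddMonoidAlgebra.single g c : LaurentR d) * phi d ((Pd d)^n) = _
        rw [phi_Pd_pow, phi_single, AddMonoidAlgebra.single_mul_single, mul_one]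
        congr 1
        funext j
        rw [expEmb_apply]
        have h3 : (Equiv.symm Finsupp.equivFunOnFinite fun i => (g i + n).toNat) j
            = (g j + n).toNat := by
          rfl
        rw [h3, Int.toNat_of_nonneg (hge j)]
        simp
  exists_of_eq := by
    intro x y h
    rw [algebraMap_eq] at h
    exact ⟨1, by rw [phi_injective d h]⟩

instance : IsNoetherianRing (LaurentR d) :=
  IsLocalization.isNoetherianRing (Sd d) (LaurentR d) inferInstance

instance : IsDomain (LaurentR d) := NoZeroDivisors.to_isDomain _

end LaurentAux

section UFDLoc

theorem my_isUnit_multiset_prod {S : Type*} [CommMonoid S] (s : Multiset S)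
    (h : ∀ x ∈ s, IsUnit x) : IsUnit s.prod := by
  induction s using Multiset.induction_on with
  | empty => simp
  | cons a t ih =>
      rw [Multiset.prod_cons]
      exact (h a (Multiset.mem_cons_self a t)).mul
        (ih fun x hx => h x (Multiset.mem_cons_of_mem hx))

theorem my_prime_map {R S : Type*} [CommRing R] [IsDomain R] [CommRing S] [IsDomain S]
    [Algebra R S] (M : Submonoid R) (hM : M ≤ nonZeroDivisors R) [IsLocalization M S]
    {p : R} (hp : Prime p) (hd : ∀ m ∈ M, ¬ p ∣ m) : Prime (algebraMap R S p) := by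
  have hinj : Function.Injective (algebraMap R S) := IsLocalization.injective S hM
  have hp0 : p ≠ 0 := hp.ne_zero
  have hJ : (Ideal.span {p} : Ideal R).IsPrime := (Ideal.span_singleton_prime hp0).mpr hp
  have hdisj : Disjoint (M : Set R) ((Ideal.span {p} : Ideal R) : Set R) := by
    rw [Set.disjoint_left]
    intro m hm hmp
    exact hd m hm (Ideal.mem_span_singleton.mp hmp)
  have hmap := IsLocalization.isPrime_of_isPrime_disjoint M S _ hJ hdisj
  rw [Ideal.map_span, Set.image_singleton] at hmap
  refine (Ideal.span_singleton_prime ?_).mp hmap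
  intro h
  exact hp0 (hinj (by rw [h, map_zero]))

theorem my_ufd_of_isLocalization {R S : Type*} [CommRing R] [IsDomain R]
    [UniqueFactorizationMonoid R] [CommRing S] [IsDomain S] [Algebra R S]
    (M : Submonoid R) (hM : M ≤ nonZeroDivisors R) [IsLocalization M S] :
    UniqueFactorizationMonoid S := by
  classical
  refine UniqueFactorizationMonoid.of_exists_prime_factors fun a ha => ?_
  obtain ⟨⟨r, m⟩, hrm⟩ := IsLocalization.surj M a
  have hu : IsUnit (algebraMap R S (m : R)) := IsLocalization.map_units S m
  have hr0 : r ≠ 0 := by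
    rintro rfl
    rw [map_zero] at hrm
    exact ha ((IsUnit.mul_left_eq_zero hu).mp hrm)
  have ha1 : Associated a (algebraMap R S r) := ⟨hu.unit, by rw [IsUnit.unit_spec]; exact hrm⟩
  obtain ⟨f, hfp, hfr⟩ := UniqueFactorizationMonoid.exists_prime_factors r hr0
  refine ⟨(f.filter (fun b => ¬ IsUnit (algebraMap R S b))).map (algebraMap R S), ?_, ?_⟩
  · intro b hb
    obtain ⟨b', hb', rfl⟩ := Multiset.mem_map.mp hb
    have hbp : Prime b' := hfp b' (Multiset.mem_of_mem_filter hb')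
    have hbu : ¬ IsUnit (algebraMap R S b') := (Multiset.mem_filter.mp hb').2
    refine my_prime_map M hM hbp ?_
    intro m' hm' hdvd
    exact hbu (isUnit_of_dvd_unit (map_dvd _ hdvd) (IsLocalization.map_units S ⟨m', hm'⟩))
  · have hsplit : f.filter (fun b => IsUnit (algebraMap R S b))
        + f.filter (fun b => ¬ IsUnit (algebraMap R S b)) = f := Multiset.filter_add_not _ f
    have hmapprod : ((f.map (algebraMap R S)).prod) = algebraMap R S f.prod :=
      Multiset.prod_hom f (algebraMap R S).toMonoidHom
    have hprodf : Associated ((f.map (algebraMap R S)).prod) a := by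
      rw [hmapprod]
      exact (hfr.map (algebraMap R S).toMonoidHom).trans ha1.symm
    have hup : IsUnit ((f.filter (fun b => IsUnit (algebraMap R S b))).map
        (algebraMap R S)).prod := by
      refine my_isUnit_multiset_prod _ ?_
      intro x hx
      obtain ⟨b, hb, rfl⟩ := Multiset.mem_map.mp hx
      exact (Multiset.mem_filter.mp hb).2
    have hdecomp : ((f.filter (fun b => IsUnit (algebraMap R S b))).map (algebraMap R S)).prod
        * ((f.filter (fun b => ¬ IsUnit (algebraMap R S b))).map (algebraMap R S)).prod
        = (f.map (algebraMap R S)).prod := by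
      rw [← Multiset.prod_add, ← Multiset.map_add, hsplit]
    have : Associated ((f.filter (fun b => ¬ IsUnit (algebraMap R S b))).map
        (algebraMap R S)).prod ((f.map (algebraMap R S)).prod) :=
      ⟨hup.unit, by rw [IsUnit.unit_spec, mul_comm]; exact hdecomp⟩
    exact this.trans hprodf

end UFDLoc

instance (d : ℕ) : UniqueFactorizationMonoid (LaurentR d) :=
  my_ufd_of_isLocalization (LaurentAux.Sd d) (LaurentAux.Sd_le d)

section Abstract

variable {R : Type*} [CommRing R] [IsDomain R] [IsNoetherianRing R]
  [UniqueFactorizationMonoid R] {k : ℕ}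

theorem mem_csp {A : Matrix (Fin k) (Fin k) R} {x : Fin k → R} :
    x ∈ Submodule.span R (Set.range fun j i => A i j) ↔ ∃ y, A.mulVec y = x := by
  have h : Submodule.span R (Set.range fun j i => A i j) = LinearMap.range A.mulVecLin := by
    rw [Matrix.range_mulVecLin]
    rfl
  rw [h]
  exact ⟨fun ⟨y, hy⟩ => ⟨y, hy⟩, fun ⟨y, hy⟩ => ⟨y, hy⟩⟩

theorem det_smul_mem (A : Matrix (Fin k) (Fin k) R) (x : Fin k → R) :
    A.det • x ∈ Submodule.span R (Set.range fun j i => A i j) := by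
  refine mem_csp.mpr ⟨(A.adjugate).mulVec x, ?_⟩
  rw [Matrix.mulVec_mulVec, Matrix.mul_adjugate, Matrix.smul_mulVec, Matrix.one_mulVec]

theorem aux_forward (A : Matrix (Fin k) (Fin k) R) (hA : A.det ≠ 0) {P : Ideal R}
    (hP : IsAssociatedPrime P ((Fin k → R) ⧸ Submodule.span R (Set.range fun j i => A i j))) :
    ∃ π : R, Irreducible π ∧ π ∣ A.det ∧ P = Ideal.span {π} := by
  classical
  set N := Submodule.span R (Set.range fun j i => A i j) with hN
  obtain ⟨hprime, xq, hPx⟩ := isAssociatedPrime_iff.mp hP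
  obtain ⟨x, rfl⟩ := Submodule.Quotient.mk_surjective _ xq
  have hmem : ∀ p : R, p ∈ P ↔ p • x ∈ N := by
    intro p
    rw [hPx, Submodule.mem_colon_singleton, Submodule.mem_bot, ← Submodule.Quotient.mk_smul,
      Submodule.Quotient.mk_eq_zero]
  have hx : x ∉ N := by
    intro h
    exact hprime.ne_top ((Ideal.eq_top_iff_one _).mpr ((hmem 1).mpr (by simpa using h)))
  have hgP : A.det ∈ P := (hmem _).mpr (det_smul_mem A x)
  set c := (A.adjugate).mulVec x with hc
  have hkey : ∀ p ∈ P, ∀ i, A.det ∣ p * c i := by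
    intro p hp i
    obtain ⟨y, hy⟩ := mem_csp.mp ((hmem p).mp hp)
    refine ⟨y i, ?_⟩
    have h1 : p • c = A.det • y := by
      rw [hc, ← Matrix.mulVec_smul, ← hy, Matrix.mulVec_mulVec, Matrix.adjugate_mul,
        Matrix.smul_mulVec, Matrix.one_mulVec]
    have h2 := congrFun h1 i
    simpa using h2
  have hnc : ∃ i, ¬ A.det ∣ c i := by
    by_contra hfor
    push_neg at hfor
    choose z hz using hfor
    apply hx
    have hgz : (A.det • z : Fin k → R) = c := by
      funext i
      simpa using (hz i).symm
    have h1 : A.det • A.mulVec z = A.det • x := by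
      rw [← Matrix.mulVec_smul, hgz, hc, Matrix.mulVec_mulVec, Matrix.mul_adjugate,
        Matrix.smul_mulVec, Matrix.one_mulVec]
    have h2 : A.mulVec z = x := by
      funext i
      have := congrFun h1 i
      simp only [Pi.smul_apply, smul_eq_mul] at this
      exact mul_left_cancel₀ hA this
    exact mem_csp.mpr ⟨z, h2⟩
  letI : NormalizationMonoid R := UniqueFactorizationMonoid.normalizationMonoid.toNormalizationMonoid
  letI : NormalizedGCDMonoid R := UniqueFactorizationMonoid.toNormalizedGCDMonoid R
  obtain ⟨i0, hi0⟩ := hnc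
  obtain ⟨e, he⟩ : ∃ e, e = gcd A.det (c i0) := ⟨_, rfl⟩
  obtain ⟨b, hb⟩ : e ∣ A.det := by rw [he]; exact gcd_dvd_left _ _
  obtain ⟨c₁, hc₁⟩ : e ∣ c i0 := by rw [he]; exact gcd_dvd_right _ _
  have he0 : e ≠ 0 := by
    intro h
    rw [h, zero_mul] at hb
    exact hA hb
  have hbu : ¬ IsUnit b := by
    intro hu
    obtain ⟨v, hv⟩ := hu.exists_right_inv
    apply hi0
    have h6 : A.det ∣ e := ⟨v, by rw [hb, mul_assoc, hv, mul_one]⟩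
    exact h6.trans ⟨c₁, hc₁⟩
  have hb0 : b ≠ 0 := by
    rintro rfl
    rw [mul_zero] at hb
    exact hA hb
  have hbdvd : ∀ p ∈ P, b ∣ p := by
    intro p hp
    have h1 : A.det ∣ p * c i0 := hkey p hp i0
    have h2 : b ∣ p * c₁ := by
      rw [hb, hc₁, mul_left_comm] at h1
      exact (mul_dvd_mul_iff_left he0).mp h1
    have hrel : IsRelPrime b c₁ := by
      intro w hwb hwc
      have h3 : e * w ∣ A.det := by rw [hb]; exact mul_dvd_mul_left e hwb
      have h4 : e * w ∣ c i0 := by rw [hc₁]; exact mul_dvd_mul_left e hwc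
      have h5 : e * w ∣ e * 1 := by
        rw [mul_one]
        conv_rhs => rw [he]
        exact dvd_gcd h3 h4
      exact isUnit_of_dvd_one ((mul_dvd_mul_iff_left he0).mp h5)
    exact hrel.dvd_of_dvd_mul_right h2
  obtain ⟨π, hπirr, hπb⟩ := WfDvdMonoid.exists_irreducible_factor hbu hb0
  have hPle : ∀ p ∈ P, π ∣ p := fun p hp => hπb.trans (hbdvd p hp)
  obtain ⟨f, hfp, hfassoc⟩ := UniqueFactorizationMonoid.exists_prime_factors A.det hA
  have hfP : f.prod ∈ P := by
    obtain ⟨u, hu⟩ := hfassoc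
    have : f.prod = A.det * (u⁻¹ : Rˣ) := by
      rw [← hu, mul_assoc, Units.mul_inv, mul_one]
    rw [this]
    exact Ideal.mul_mem_right _ _ hgP
  obtain ⟨q, hqf, hqP⟩ := (hprime.multiset_prod_mem_iff_exists_mem f).mp hfP
  have hq : Prime q := hfp q hqf
  have hassoc : Associated π q := hπirr.associated_of_dvd hq.irreducible (hPle q hqP)
  have hπP : π ∈ P := by
    obtain ⟨u, hu⟩ := hassoc
    have : π = q * (u⁻¹ : Rˣ) := by rw [← hu, mul_assoc, Units.mul_inv, mul_one]
    rw [this]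
    exact Ideal.mul_mem_right _ _ hqP
  refine ⟨π, hπirr, ?_, ?_⟩
  · exact (hπb.trans ⟨e, by rw [hb, mul_comm]⟩)
  · refine le_antisymm ?_ ?_
    · intro p hp
      exact Ideal.mem_span_singleton.mpr (hPle p hp)
    · rw [Ideal.span_le, Set.singleton_subset_iff]
      exact hπP

end Abstract

section Abstract2

variable {R : Type*} [CommRing R] [IsDomain R] [IsNoetherianRing R]
  [UniqueFactorizationMonoid R] {k : ℕ}

theorem aux_main (A : Matrix (Fin k) (Fin k) R) (hA : A.det ≠ 0) :
    associatedPrimes R ((Fin k → R) ⧸ Submodule.span R (Set.range fun j i => A i j))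
      = {P : Ideal R | ∃ π : R, Irreducible π ∧ π ∣ A.det ∧ P = Ideal.span {π}} := by
  classical
  ext P
  simp only [Set.mem_setOf_eq, AssociatedPrimes.mem_iff]
  constructor
  · exact fun h => aux_forward A hA h
  · rintro ⟨π, hπ, hπg, rfl⟩
    have hstep : ∃ x : Fin k → R, x ∉ Submodule.span R (Set.range fun j i => A i j)
        ∧ π • x ∈ Submodule.span R (Set.range fun j i => A i j) := by
      by_contra hcon
      push_neg at hcon
      have hinj : ∀ x : Fin k → R, π • x ∈ Submodule.span R (Set.range fun j i => A i j)
          → x ∈ Submodule.span R (Set.range fun j i => A i j) := by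
        intro x hxm
        by_contra hxn
        exact hcon x hxn hxm
      have hinjn : ∀ (n : ℕ) (x : Fin k → R),
          π ^ n • x ∈ Submodule.span R (Set.range fun j i => A i j)
          → x ∈ Submodule.span R (Set.range fun j i => A i j) := by
        intro n
        induction n with
        | zero => intro x hxm; simpa using hxm
        | succ n ih =>
            intro x hxm
            rw [pow_succ, mul_smul] at hxm
            exact hinj x (ih _ hxm)
      obtain ⟨e, m, hm, hgm⟩ := WfDvdMonoid.max_power_factor hA hπ
      have hcol : ∀ j : Fin k, ∃ y : Fin k → R, A.mulVec y = m • (Pi.single j 1 : Fin k → R) := by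
        intro j
        apply mem_csp.mp
        apply hinjn e
        have h1 : π ^ e • m • (Pi.single j 1 : Fin k → R) = A.det • (Pi.single j 1 : Fin k → R) := by
          rw [smul_smul, ← hgm]
        rw [h1]
        exact det_smul_mem A _
      choose y hy using hcol
      set Y : Matrix (Fin k) (Fin k) R := Matrix.of (fun i j => y j i) with hYdef
      have hAY : A * Y = m • (1 : Matrix (Fin k) (Fin k) R) := by
        ext i j
        have h2 := congrFun (hy j) i
        simp only [Matrix.mulVec, dotProduct, Pi.smul_apply, smul_eq_mul] at h2
        simp only [Matrix.mul_apply, hYdef, Matrix.of_apply, Matrix.smul_apply,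
          Matrix.one_apply, smul_eq_mul]
        rw [h2, Pi.single_apply]
      have hdet : A.det * Y.det = m ^ k := by
        have h3 := congrArg Matrix.det hAY
        rwa [Matrix.det_mul, Matrix.det_smul, Matrix.det_one, mul_one, Fintype.card_fin] at h3
      have hπm : π ∣ m := by
        have hpr : Prime π := UniqueFactorizationMonoid.irreducible_iff_prime.mp hπ
        exact hpr.dvd_of_dvd_pow (dvd_trans hπg ⟨Y.det, hdet.symm⟩)
      exact hm hπm
    obtain ⟨x, hxn, hxπ⟩ := hstep
    set T := Submodule.torsionBy R
      ((Fin k → R) ⧸ Submodule.span R (Set.range fun j i => A i j)) π with hT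
    have hxT : Submodule.Quotient.mk (p := Submodule.span R (Set.range fun j i => A i j)) x
        ∈ T := by
      rw [hT, Submodule.mem_torsionBy_iff, ← Submodule.Quotient.mk_smul,
        Submodule.Quotient.mk_eq_zero]
      exact hxπ
    have hx0 : (⟨_, hxT⟩ : T) ≠ 0 := by
      intro h
      apply hxn
      have h4 : Submodule.Quotient.mk
          (p := Submodule.span R (Set.range fun j i => A i j)) x = 0 :=
        congrArg Subtype.val h
      rwa [Submodule.Quotient.mk_eq_zero] at h4
    haveI : Nontrivial T := ⟨⟨_, 0, hx0⟩⟩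
    obtain ⟨Q, hQ⟩ := associatedPrimes.nonempty R T
    have hQM : IsAssociatedPrime Q
        ((Fin k → R) ⧸ Submodule.span R (Set.range fun j i => A i j)) :=
      hQ.map_of_injective T.subtype (Submodule.injective_subtype T)
    obtain ⟨π', hπ'irr, hπ'g, hQeq⟩ := aux_forward A hA hQM
    obtain ⟨hQp, t, hQt⟩ := isAssociatedPrime_iff.mp hQ
    have hπQ : π ∈ Q := by
      rw [hQt, Submodule.mem_colon_singleton, Submodule.mem_bot]
      exact Submodule.smul_torsionBy π t
    have hdvd : π' ∣ π := Ideal.mem_span_singleton.mp (hQeq ▸ hπQ)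
    have hassoc : Associated π' π := hπ'irr.associated_of_dvd hπ hdvd
    have hspan : Ideal.span {π} = Q := by
      rw [hQeq]
      exact Ideal.span_singleton_eq_span_singleton.mpr hassoc.symm
    rw [hspan]
    exact hQM

end Abstract2

/-- The submodule `A·R^k ⊆ R^k` generated by the columns of the `k × k` matrix `A`. -/
def colSpan {d k n : ℕ} (A : Matrix (Fin k) (Fin n) (LaurentR d)) :
    Submodule (LaurentR d) (Fin k → LaurentR d) :=
  Submodule.span (LaurentR d) (Set.range fun j i => A i j)

/-- The module `M_A = R^k / A·R^k`. -/
abbrev MA {d k n : ℕ} (A : Matrix (Fin k) (Fin n) (LaurentR d)) : Type :=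
  (Fin k → LaurentR d) ⧸ colSpan A

theorem associated_primes_of_square_presentation (d k : ℕ)
    (A : Matrix (Fin k) (Fin k) (LaurentR d)) (hA : A.det ≠ 0) :
    associatedPrimes (LaurentR d) (MA A)
      = {P : Ideal (LaurentR d) | ∃ π : LaurentR d,
          Irreducible π ∧ π ∣ A.det ∧ P = Ideal.span {π}} := by
  exact aux_main A hA
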